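/- Let n be a positive integer, let p_1,…,p_n be real weights such that P_k ≥ 0 for all k = 1,…,n, and let (a_k)_{k=1}^n and (b_k)_{k=1}^n be non-increasing sequences of positive real numbers such that the sequence (a_k/b_k)_{k=1}^n is monotone (either non-increasing or non-decreasing) and 0 < m ≤ a_k/b_k ≤ M < ∞ for all k. Then (∑_{k=1}^n p_k a_k^2) · (∑_{k=1}^n p_k b_k^2) ≤ (1/4) · (m/M + M/m)^2 · (∑_{k=1}^n p_k a_k b_k)^2. -/

import Mathlib

set_option maxHeartbeats 1000000

open Finset

/-- Abel summation bound. -/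
lemma abel_aux (p c : ℕ → ℝ) :
    ∀ n : ℕ, 0 < n → (∀ k, k < n → 0 ≤ ∑ i ∈ Finset.range (k + 1), p i) →
    (∀ i j, i ≤ j → j < n → c j ≤ c i) →
    (∑ k ∈ Finset.range n, p k) * c (n - 1) ≤ ∑ k ∈ Finset.range n, p k * c k := by
  intro n
  induction n with
  | zero => intro h; exact absurd h (lt_irrefl 0)
  | succ n ih =>
    intro _ hP hc
    rcases Nat.eq_zero_or_pos n with h0 | hpos
    · subst h0; simp
    · have IH := ih hpos (fun k hk => hP k (by omega)) (fun i j hij hj => hc i j hij (by omega))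
      rw [Finset.sum_range_succ, Finset.sum_range_succ]
      have hPn : 0 ≤ ∑ i ∈ Finset.range n, p i := by
        have := hP (n - 1) (by omega)
        rwa [Nat.sub_add_cancel hpos] at this
      have hcn : c n ≤ c (n - 1) := hc (n - 1) n (by omega) (by omega)
      have h1 : (∑ k ∈ Finset.range n, p k) * c n ≤ (∑ k ∈ Finset.range n, p k) * c (n - 1) :=
        mul_le_mul_of_nonneg_left hcn hPn
      have hn1 : n + 1 - 1 = n := rfl
      rw [hn1]
      nlinarith [IH]

lemma abel_nonneg (p c : ℕ → ℝ) (n : ℕ) (hn : 0 < n)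
    (hP : ∀ k, k < n → 0 ≤ ∑ i ∈ Finset.range (k + 1), p i)
    (hc : ∀ i j, i ≤ j → j < n → c j ≤ c i) (hlast : 0 ≤ c (n - 1)) :
    0 ≤ ∑ k ∈ Finset.range n, p k * c k := by
  have hPn : 0 ≤ ∑ i ∈ Finset.range n, p i := by
    have := hP (n - 1) (by omega)
    rwa [Nat.sub_add_cancel hn] at this
  have := abel_aux p c n hn hP hc
  nlinarith [mul_nonneg hPn hlast]

theorem key (n : ℕ) (hn : 0 < n) (p a b : ℕ → ℝ) (m M : ℝ)
    (hP : ∀ k < n, 0 ≤ ∑ i ∈ Finset.range (k + 1), p i)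
    (hapos : ∀ k < n, 0 < a k) (hbpos : ∀ k < n, 0 < b k)
    (ha : ∀ i j, i ≤ j → j < n → a j ≤ a i)
    (hb : ∀ i j, i ≤ j → j < n → b j ≤ b i)
    (hr : ∀ i j, i ≤ j → j < n → a j / b j ≤ a i / b i)
    (hm : 0 < m) (hbound : ∀ k < n, m ≤ a k / b k ∧ a k / b k ≤ M) :
    (∑ k ∈ Finset.range n, p k * a k ^ 2) * (∑ k ∈ Finset.range n, p k * b k ^ 2) ≤
      1 / 4 * (m / M + M / m) ^ 2 * (∑ k ∈ Finset.range n, p k * (a k * b k)) ^ 2 := by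
  have hmM : m ≤ M := le_trans (hbound 0 hn).1 (hbound 0 hn).2
  have hM : 0 < M := lt_of_lt_of_le hm hmM
  set D : ℝ := m ^ 2 + M ^ 2 with hD
  have hD0 : 0 < D := by positivity
  set t : ℝ := D / (2 * m * M ^ 2) with ht
  set e : ℝ := 2 * m * M ^ 2 / D with he
  set C : ℝ := m / M + M / m with hC
  have ht0 : 0 < t := by positivity
  have he0 : 0 < e := by positivity
  have hte : t * e = 1 := by rw [ht, he]; field_simp
  have hCt : C = 2 * t * M := by
    rw [hC, ht, hD]; field_simp
  -- Φ
  set Φ : ℝ → ℝ := fun r => C * r - t * r ^ 2 - e with hΦ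
  have hΦmono : ∀ r r', m ≤ r → r ≤ r' → r' ≤ M → Φ r ≤ Φ r' := by
    intro r r' h1 h2 h3
    simp only [hΦ]
    have h4 : 0 ≤ t * (r' - r) * (2 * M - r - r') := by
      apply mul_nonneg (mul_nonneg ht0.le (by linarith)) (by linarith)
    nlinarith [h4, hCt]
  have hΦnonneg : ∀ r, m ≤ r → r ≤ M → 0 ≤ Φ r := by
    intro r h1 h2
    have hbase : 0 ≤ Φ m := by
      have h2M : 0 ≤ 2 * M ^ 3 - M ^ 2 * m - m ^ 3 := by
        nlinarith [mul_le_mul_of_nonneg_left hmM (sq_nonneg M),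
          mul_le_mul_of_nonneg_left hmM (sq_nonneg m), sq_nonneg (M - m), mul_pos hm hM]
      have hkey : 0 ≤ m * (M - m) ^ 2 * (2 * M ^ 3 - M ^ 2 * m - m ^ 3) := by positivity
      have hid : Φ m = m * (M - m) ^ 2 * (2 * M ^ 3 - M ^ 2 * m - m ^ 3) / (2 * m * M ^ 2 * D) := by
        simp only [hΦ, ht, he, hC, hD]
        field_simp
        ring
      rw [hid]
      exact div_nonneg hkey (by positivity)
    calc (0:ℝ) ≤ Φ m := hbase
    _ ≤ Φ r := hΦmono m r le_rfl h1 h2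
  clear_value D t e C Φ
  -- the sequence c
  set c : ℕ → ℝ := fun k => b k ^ 2 * Φ (a k / b k) with hc
  have hcid : ∀ k, k < n → c k = C * (a k * b k) - t * a k ^ 2 - e * b k ^ 2 := by
    intro k hk
    have hbk := hbpos k hk
    simp only [hc, hΦ]
    field_simp
  have hc0 : ∀ k, k < n → 0 ≤ c k := by
    intro k hk
    exact mul_nonneg (sq_nonneg _) (hΦnonneg _ (hbound k hk).1 (hbound k hk).2)
  have hcmono : ∀ i j, i ≤ j → j < n → c j ≤ c i := by
    intro i j hij hj
    have hi : i < n := lt_of_le_of_lt hij hj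
    have h1 : 0 ≤ Φ (a j / b j) := hΦnonneg _ (hbound j hj).1 (hbound j hj).2
    have h2 : Φ (a j / b j) ≤ Φ (a i / b i) :=
      hΦmono _ _ (hbound j hj).1 (hr i j hij hj) (hbound i hi).2
    have h3 : b j ^ 2 ≤ b i ^ 2 := by
      have := hb i j hij hj
      nlinarith [hbpos j hj, hbpos i hi]
    simp only [hc]
    exact mul_le_mul h3 h2 h1 (sq_nonneg _)
  -- Abel gives the linear bound
  have habel : 0 ≤ ∑ k ∈ Finset.range n, p k * c k :=
    abel_nonneg p c n hn hP hcmono (hc0 (n - 1) (by omega))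
  have hA0 : 0 ≤ ∑ k ∈ Finset.range n, p k * a k ^ 2 := by
    refine abel_nonneg p (fun k => a k ^ 2) n hn hP (fun i j hij hj => ?_) (sq_nonneg _)
    have hi : i < n := lt_of_le_of_lt hij hj
    nlinarith [ha i j hij hj, hapos j hj, hapos i hi]
  have hB0 : 0 ≤ ∑ k ∈ Finset.range n, p k * b k ^ 2 := by
    refine abel_nonneg p (fun k => b k ^ 2) n hn hP (fun i j hij hj => ?_) (sq_nonneg _)
    have hi : i < n := lt_of_le_of_lt hij hj
    nlinarith [hb i j hij hj, hbpos j hj, hbpos i hi]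
  set A : ℝ := ∑ k ∈ Finset.range n, p k * a k ^ 2 with hA
  set B : ℝ := ∑ k ∈ Finset.range n, p k * b k ^ 2 with hB
  set S : ℝ := ∑ k ∈ Finset.range n, p k * (a k * b k) with hS
  clear_value A B S
  have hsum : ∑ k ∈ Finset.range n, p k * c k = C * S - t * A - e * B := by
    rw [hS, hA, hB, Finset.mul_sum, Finset.mul_sum, Finset.mul_sum, ← Finset.sum_sub_distrib,
      ← Finset.sum_sub_distrib]
    refine Finset.sum_congr rfl fun k hk => ?_
    rw [hcid k (Finset.mem_range.mp hk)]
    ring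
  have hlin : t * A + e * B ≤ C * S := by rw [hsum] at habel; linarith
  -- conclude by AM-GM
  have h6 : 0 ≤ t * A + e * B := add_nonneg (mul_nonneg ht0.le hA0) (mul_nonneg he0.le hB0)
  have h5 : (t * A + e * B) ^ 2 ≤ (C * S) ^ 2 := by
    nlinarith [mul_nonneg (sub_nonneg.2 hlin) (by linarith : (0:ℝ) ≤ C * S + (t * A + e * B))]
  have h7 : t * e * (A * B) = A * B := by rw [hte, one_mul]
  have h4 : 4 * (A * B) ≤ (C * S) ^ 2 := by
    nlinarith [sq_nonneg (t * A - e * B), h7, h5]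
  have h8 : A * B ≤ (C * S) ^ 2 / 4 := by linarith
  calc A * B ≤ (C * S) ^ 2 / 4 := h8
  _ = 1 / 4 * C ^ 2 * S ^ 2 := by ring

theorem stmt_4 (n : ℕ) (hn : 0 < n) (p a b : ℕ → ℝ) (m M : ℝ)
    (hP : ∀ k < n, 0 ≤ ∑ i ∈ Finset.range (k + 1), p i)
    (hapos : ∀ k < n, 0 < a k) (hbpos : ∀ k < n, 0 < b k)
    (ha : ∀ i j, i ≤ j → j < n → a j ≤ a i)
    (hb : ∀ i j, i ≤ j → j < n → b j ≤ b i)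
    (hmono : (∀ i j, i ≤ j → j < n → a j / b j ≤ a i / b i) ∨
             (∀ i j, i ≤ j → j < n → a i / b i ≤ a j / b j))
    (hm : 0 < m) (hbound : ∀ k < n, m ≤ a k / b k ∧ a k / b k ≤ M) :
    (∑ k ∈ Finset.range n, p k * a k ^ 2) * (∑ k ∈ Finset.range n, p k * b k ^ 2) ≤
      1 / 4 * (m / M + M / m) ^ 2 * (∑ k ∈ Finset.range n, p k * (a k * b k)) ^ 2 := by
  have hmM : m ≤ M := le_trans (hbound 0 hn).1 (hbound 0 hn).2
  have hM : 0 < M := lt_of_lt_of_le hm hmM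
  rcases hmono with hr | hr
  · exact key n hn p a b m M hP hapos hbpos ha hb hr hm hbound
  · -- swap the roles of a and b
    have hrpos : ∀ k, k < n → 0 < a k / b k := fun k hk => div_pos (hapos k hk) (hbpos k hk)
    have hbound' : ∀ k < n, 1 / M ≤ b k / a k ∧ b k / a k ≤ 1 / m := by
      intro k hk
      have h1 := (hbound k hk).1
      have h2 := (hbound k hk).2
      have hba : b k / a k = 1 / (a k / b k) := by
        rw [one_div_div]
      constructor
      · rw [hba]
        exact one_div_le_one_div_of_le (hrpos k hk) h2
      · rw [hba]
        exact one_div_le_one_div_of_le hm h1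
    have hr' : ∀ i j, i ≤ j → j < n → b j / a j ≤ b i / a i := by
      intro i j hij hj
      have hi : i < n := lt_of_le_of_lt hij hj
      have h1 : a i / b i ≤ a j / b j := hr i j hij hj
      have h2 : b j / a j = 1 / (a j / b j) := by rw [one_div_div]
      have h3 : b i / a i = 1 / (a i / b i) := by rw [one_div_div]
      rw [h2, h3]
      exact one_div_le_one_div_of_le (hrpos i hi) h1
    have hm' : 0 < 1 / M := by positivity
    have hkey := key n hn p b a (1 / M) (1 / m) hP hbpos hapos hb ha hr' hm' hbound'
    have hc1 : 1 / M / (1 / m) = m / M := by field_simp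
    have hc2 : 1 / m / (1 / M) = M / m := by field_simp
    rw [hc1, hc2] at hkey
    have hc3 : (∑ k ∈ Finset.range n, p k * (b k * a k)) =
        ∑ k ∈ Finset.range n, p k * (a k * b k) := by
      refine Finset.sum_congr rfl fun k _ => by ring
    rw [hc3] at hkey
    linarith [hkey]
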